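/- Every finitely generated subgroup H of G = F_n × A, where F_n is a finitely generated free group, is a factor of a finite-index subgroup of G: there exists a subgroup K of G with H ≤ K and [G : K] finite, a subgroup B of Kπ such that Kπ is the internal free product of Hπ and B (i.e. the natural homomorphism Hπ ∗ B → Kπ induced by the inclusions is an isomorphism), and a subgroup C of L_K such that L_K is the internal direct product of L_H and C. -/

import Mathlib

open Subgroup

/-- Extend a partial injection on a finite type to a permutation. -/
private lemma exists_perm_extension {α : Type*} [Finite α] {p : Set α} {f : α → α}
    (hinj : Set.InjOn f p) : ∃ e : Equiv.Perm α, ∀ x ∈ p, e x = f x := by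
  classical
  cases nonempty_fintype α
  set s : Finset α := p.toFinset with hs
  set t : Finset α := s.image f with ht
  have hst : t.card = s.card :=
    Finset.card_image_of_injOn (by simpa [hs, Set.mem_toFinset] using hinj)
  have hcompl : (tᶜ : Finset α).card = (sᶜ : Finset α).card := by
    simp [Finset.card_compl, hst]
  have e0 : (tᶜ : Finset α) ≃ (sᶜ : Finset α) :=
    Fintype.equivOfCardEq (by simp only [Fintype.card_coe]; exact hcompl)
  set e1 := e0.symm
  have he1 : ∀ x : (sᶜ : Finset α), (e1 x : α) ∈ (tᶜ : Finset α) := fun x => (e1 x).2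
  set g : α → α := fun x =>
    if h : x ∈ s then f x else (e1 ⟨x, Finset.mem_compl.2 h⟩ : α) with hg
  have hginj : Function.Injective g := by
    intro x y hxy
    by_cases hx : x ∈ s <;> by_cases hy : y ∈ s
    · exact hinj (by simpa [hs, Set.mem_toFinset] using hx)
        (by simpa [hs, Set.mem_toFinset] using hy) (by simpa [hg, hx, hy] using hxy)
    · exfalso
      have h1 : g x ∈ t := by simp only [hg, dif_pos hx]; exact Finset.mem_image_of_mem f hx
      have h2 : g y ∈ (tᶜ : Finset α) := by simp only [hg, dif_neg hy]; exact he1 _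
      rw [hxy] at h1; exact (Finset.mem_compl.1 h2) h1
    · exfalso
      have h1 : g y ∈ t := by simp only [hg, dif_pos hy]; exact Finset.mem_image_of_mem f hy
      have h2 : g x ∈ (tᶜ : Finset α) := by simp only [hg, dif_neg hx]; exact he1 _
      rw [← hxy] at h1; exact (Finset.mem_compl.1 h2) h1
    · have h3 := hxy
      simp only [hg, dif_neg hx, dif_neg hy] at h3
      have h4 := e1.injective (Subtype.ext h3)
      simpa using congrArg Subtype.val h4
  refine ⟨Equiv.ofBijective g (Finite.injective_iff_bijective.1 hginj), ?_⟩
  intro x hx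
  exact dif_pos (by simpa [hs, Set.mem_toFinset] using hx)

/-- Every subgroup of a f.g. abelian group has a complement up to finite index. -/
private lemma abelian_complement (A : Type*) [CommGroup A] [Group.FG A] (L : Subgroup A) :
    ∃ C : Subgroup A, L ⊓ C = ⊥ ∧ Finite (A ⧸ (L ⊔ C : Subgroup A)) := by
  classical
  haveI : AddGroup.FG (Additive A) := GroupFG.iff_add_fg.mp ‹_›
  haveI : Module.Finite ℤ (Additive A) := Module.Finite.iff_addGroup_fg.mpr ‹_›
  set eiso : Subgroup A ≃o Submodule ℤ (Additive A) :=
    (Subgroup.toAddSubgroup).trans (AddSubgroup.toIntSubmodule) with heiso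
  have hmem : ∀ (K : Subgroup A) (a : A), a ∈ K ↔ Additive.ofMul a ∈ eiso K := by
    intro K a
    simp [heiso, OrderIso.trans_apply]
    rfl
  set L' : Submodule ℤ (Additive A) := eiso L with hL'
  set Lsat : Submodule ℤ (Additive A) :=
    (Submodule.torsion ℤ ((Additive A) ⧸ L')).comap L'.mkQ with hLsat
  have hLLsat : L' ≤ Lsat := by
    intro x hx
    simp only [hLsat, Submodule.mem_comap, Submodule.mkQ_apply]
    have h0 : (Submodule.Quotient.mk x : (Additive A) ⧸ L') = 0 :=
      (Submodule.Quotient.mk_eq_zero _).2 hx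
    rw [h0]; exact zero_mem _
  haveI : NoZeroSMulDivisors ℤ ((Additive A) ⧸ Lsat) := by
    constructor
    intro k x hkx
    rcases eq_or_ne k 0 with hk | hk
    · exact Or.inl hk
    · refine Or.inr ?_
      obtain ⟨m, rfl⟩ := Lsat.mkQ_surjective x
      have hmem' : k • m ∈ Lsat := by
        rw [← map_zsmul] at hkx
        rwa [Submodule.mkQ_apply, Submodule.Quotient.mk_eq_zero] at hkx
      rw [hLsat, Submodule.mem_comap, Submodule.mem_torsion_iff] at hmem'
      obtain ⟨j, hj⟩ := hmem'
      have hjk : ((j : ℤ) * k) ∈ nonZeroDivisors ℤ :=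
        mem_nonZeroDivisors_of_ne_zero (mul_ne_zero (nonZeroDivisors.ne_zero j.2) hk)
      have hm : m ∈ Lsat := by
        rw [hLsat, Submodule.mem_comap, Submodule.mem_torsion_iff]
        refine ⟨⟨(j : ℤ) * k, hjk⟩, ?_⟩
        have h5 : (j : ℤ) • (k • L'.mkQ m) = 0 := by
          rw [map_zsmul] at hj; exact hj
        show ((j : ℤ) * k) • L'.mkQ m = 0
        rw [mul_smul]; exact h5
      rw [show Lsat.mkQ m = Submodule.Quotient.mk m from rfl, Submodule.Quotient.mk_eq_zero]
      exact hm
  haveI : Module.Free ℤ ((Additive A) ⧸ Lsat) := Module.free_of_finite_type_torsion_free'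
  obtain ⟨s, hsec⟩ := Module.projective_lifting_property Lsat.mkQ
    (LinearMap.id : ((Additive A) ⧸ Lsat) →ₗ[ℤ] ((Additive A) ⧸ Lsat)) Lsat.mkQ_surjective
  have hsec' : ∀ q, Lsat.mkQ (s q) = q := fun q => congrFun (congrArg DFunLike.coe hsec) q
  set C' : Submodule ℤ (Additive A) := LinearMap.range s with hC'
  refine ⟨eiso.symm C', ?_, ?_⟩
  · -- trivial intersection
    rw [← eiso.injective.eq_iff, OrderIso.map_inf, eiso.apply_symm_apply, ← hL']
    rw [show eiso ⊥ = ⊥ from eiso.map_bot]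
    ext x
    simp only [Submodule.mem_inf, Submodule.mem_bot]
    constructor
    · rintro ⟨hxL, y, rfl⟩
      have : Lsat.mkQ (s y) = 0 := (Submodule.Quotient.mk_eq_zero _).2 (hLLsat hxL)
      rw [hsec'] at this
      rw [this]; exact map_zero s
    · rintro rfl; exact ⟨zero_mem _, zero_mem _⟩
  · -- finite index
    set K : Subgroup A := L ⊔ eiso.symm C' with hK
    have hKmod : eiso K = L' ⊔ C' := by
      rw [hK, OrderIso.map_sup, eiso.apply_symm_apply, hL']
    haveI : Group.FG (A ⧸ K) := Group.fg_of_surjective (QuotientGroup.mk'_surjective K)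
    refine CommGroup.finite_of_fg_torsion _ ?_
    intro x
    obtain ⟨a, rfl⟩ := QuotientGroup.mk'_surjective K x
    -- decompose `a` : j • a ∈ K for some j ≠ 0
    set m : Additive A := Additive.ofMul a with hm
    set b : Additive A := m - s (Lsat.mkQ m) with hb
    have hbLsat : b ∈ Lsat := by
      have : Lsat.mkQ b = 0 := by
        rw [hb, map_sub, hsec']
        simp
      rwa [Submodule.mkQ_apply, Submodule.Quotient.mk_eq_zero] at this
    rw [hLsat, Submodule.mem_comap, Submodule.mem_torsion_iff] at hbLsat
    obtain ⟨j, hj⟩ := hbLsat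
    have hjb : (j : ℤ) • b ∈ L' := by
      have h6 : L'.mkQ ((j : ℤ) • b) = 0 := by rw [map_zsmul]; exact hj
      rwa [Submodule.mkQ_apply, Submodule.Quotient.mk_eq_zero] at h6
    have hjm : (j : ℤ) • m ∈ L' ⊔ C' := by
      have hdecomp : (j : ℤ) • m = (j : ℤ) • b + (j : ℤ) • (s (Lsat.mkQ m)) := by
        rw [hb, smul_sub]; abel
      rw [hdecomp]
      exact Submodule.add_mem _ (Submodule.mem_sup_left hjb)
        (Submodule.mem_sup_right ⟨(j : ℤ) • (Lsat.mkQ m), map_zsmul s _ _⟩)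
    -- translate back to `A`
    have haK : a ^ ((j : ℤ)) ∈ K := by
      rw [hmem K]
      rw [hKmod]
      have : Additive.ofMul (a ^ ((j : ℤ))) = (j : ℤ) • m := rfl
      rw [this]; exact hjm
    have hfin : (QuotientGroup.mk' K a) ^ ((j : ℤ)) = 1 := by
      rw [← map_zpow]
      exact (QuotientGroup.eq_one_iff _).2 haK
    have hj0 : (j : ℤ) ≠ 0 := nonZeroDivisors.ne_zero j.2
    refine isOfFinOrder_iff_pow_eq_one.2 ⟨(j : ℤ).natAbs, Int.natAbs_pos.2 hj0, ?_⟩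
    have := hfin
    rcases Int.natAbs_eq (j : ℤ) with he | he
    · rw [he] at this; rwa [zpow_natCast] at this
    · rw [he] at this
      rw [zpow_neg, zpow_natCast, inv_eq_one] at this
      exact this


theorem FreeGroup.lift.range_le {α G : Type*} [Group G] {f : α → G} {s : Subgroup G}
    (H : Set.range f ⊆ s) : (FreeGroup.lift f).range ≤ s := by
  rintro _ ⟨y, rfl⟩
  induction y using FreeGroup.induction_on with
  | C1 => rw [_root_.map_one]; exact one_mem _
  | of x => rw [FreeGroup.lift_apply_of]; exact H ⟨x, rfl⟩
  | inv_of x hx => rw [_root_.map_inv]; exact inv_mem hx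
  | mul x y hx hy => rw [_root_.map_mul]; exact mul_mem hx hy

namespace HallAux

open FreeGroup Subgroup

variable {n : ℕ} {X : Type} (σ : Fin n → Equiv.Perm X) (v₀ : X) (good : X → Fin n → Prop)

/-- The action homomorphism of the free group. -/
noncomputable def phi : FreeGroup (Fin n) →* Equiv.Perm X := FreeGroup.lift σ

lemma phi_of (s : Fin n) : phi σ (FreeGroup.of s) = σ s := FreeGroup.lift_apply_of

/-- vertices reachable within `k` good steps from the base point -/
def reach : ℕ → Set X
  | 0 => {v₀}
  | (k+1) => reach k ∪
      {x | ∃ v ∈ reach k, ∃ s, (good v s ∧ σ s v = x) ∨ (good x s ∧ σ s x = v)}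

section Tree

variable (hconn : ∀ x, ∃ k, x ∈ reach σ v₀ good k)

open Classical in
/-- distance from the base point in the graph of good darts -/
noncomputable def dd (x : X) : ℕ := Nat.find (hconn x)

open Classical in
lemma dd_spec (x : X) : x ∈ reach σ v₀ good (dd σ v₀ good hconn x) := Nat.find_spec (hconn x)

open Classical in
lemma dd_le {x : X} {k : ℕ} (h : x ∈ reach σ v₀ good k) : dd σ v₀ good hconn x ≤ k :=
  Nat.find_le h

open Classical in
lemma not_mem_of_lt_dd {x : X} {k : ℕ} (h : k < dd σ v₀ good hconn x) :
    x ∉ reach σ v₀ good k := Nat.find_min (hconn x) h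

lemma dd_v0 : dd σ v₀ good hconn v₀ = 0 :=
  Nat.le_zero.1 (dd_le σ v₀ good hconn rfl)

lemma eq_v0_of_dd_eq_zero {x : X} (h : dd σ v₀ good hconn x = 0) : x = v₀ := by
  have := dd_spec σ v₀ good hconn x
  rw [h] at this
  exact this

lemma exists_step {x : X} (hx : dd σ v₀ good hconn x ≠ 0) :
    ∃ p : X × Fin n × Bool, dd σ v₀ good hconn p.1 < dd σ v₀ good hconn x ∧
      ((p.2.2 = true ∧ good p.1 p.2.1 ∧ σ p.2.1 p.1 = x) ∨
       (p.2.2 = false ∧ good x p.2.1 ∧ σ p.2.1 x = p.1)) := by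
  obtain ⟨m, hm⟩ : ∃ m, dd σ v₀ good hconn x = m + 1 :=
    ⟨dd σ v₀ good hconn x - 1, (Nat.succ_pred_eq_of_pos (Nat.pos_of_ne_zero hx)).symm⟩
  have hmem := dd_spec σ v₀ good hconn x
  rw [hm] at hmem
  rcases hmem with hmem | hmem
  · exact absurd hmem (not_mem_of_lt_dd σ v₀ good hconn (by omega))
  · obtain ⟨v, hv, s, hor⟩ := hmem
    have hdv : dd σ v₀ good hconn v ≤ m := dd_le σ v₀ good hconn hv
    rcases hor with ⟨hg, he⟩ | ⟨hg, he⟩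
    · refine ⟨(v, s, true), ?_, Or.inl ⟨rfl, hg, he⟩⟩
      show dd σ v₀ good hconn v < dd σ v₀ good hconn x
      omega
    · refine ⟨(v, s, false), ?_, Or.inr ⟨rfl, hg, he⟩⟩
      show dd σ v₀ good hconn v < dd σ v₀ good hconn x
      omega

/-- chosen predecessor data -/
noncomputable def stepv (x : X) (hx : dd σ v₀ good hconn x ≠ 0) : X × Fin n × Bool :=
  Classical.choose (exists_step σ v₀ good hconn hx)

lemma stepv_spec (x : X) (hx : dd σ v₀ good hconn x ≠ 0) :
    dd σ v₀ good hconn (stepv σ v₀ good hconn x hx).1 < dd σ v₀ good hconn x ∧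
      (((stepv σ v₀ good hconn x hx).2.2 = true ∧
          good (stepv σ v₀ good hconn x hx).1 (stepv σ v₀ good hconn x hx).2.1 ∧
          σ (stepv σ v₀ good hconn x hx).2.1 (stepv σ v₀ good hconn x hx).1 = x) ∨
       ((stepv σ v₀ good hconn x hx).2.2 = false ∧
          good x (stepv σ v₀ good hconn x hx).2.1 ∧
          σ (stepv σ v₀ good hconn x hx).2.1 x = (stepv σ v₀ good hconn x hx).1)) :=
  Classical.choose_spec (exists_step σ v₀ good hconn hx)

/-- the spanning-tree path word from the base point to `x` (read right-to-left) -/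
noncomputable def tt (x : X) : FreeGroup (Fin n) :=
  if hx : dd σ v₀ good hconn x = 0 then 1
  else
    (if (stepv σ v₀ good hconn x hx).2.2 then FreeGroup.of (stepv σ v₀ good hconn x hx).2.1
     else (FreeGroup.of (stepv σ v₀ good hconn x hx).2.1)⁻¹) *
      tt (stepv σ v₀ good hconn x hx).1
termination_by dd σ v₀ good hconn x
decreasing_by exact (stepv_spec σ v₀ good hconn x hx).1

lemma tt_v0 : tt σ v₀ good hconn v₀ = 1 := by
  rw [tt, dif_pos (dd_v0 σ v₀ good hconn)]

lemma tt_phi (x : X) : phi σ (tt σ v₀ good hconn x) v₀ = x := by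
  generalize hk : dd σ v₀ good hconn x = k
  induction k using Nat.strong_induction_on generalizing x with
  | _ k ih =>
    rw [tt]
    by_cases hx : dd σ v₀ good hconn x = 0
    · rw [dif_pos hx]
      simp only [_root_.map_one, Equiv.Perm.coe_one, id_eq]
      exact (eq_v0_of_dd_eq_zero σ v₀ good hconn hx).symm
    · rw [dif_neg hx]
      obtain ⟨hlt, hor⟩ := stepv_spec σ v₀ good hconn x hx
      set p := stepv σ v₀ good hconn x hx with hp
      have ihp := ih (dd σ v₀ good hconn p.1) (hk ▸ hlt) p.1 rfl
      rcases hor with ⟨hb, _, he⟩ | ⟨hb, _, he⟩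
      · rw [hb, if_pos rfl]
        simp only [_root_.map_mul, Equiv.Perm.mul_apply, phi_of]
        rw [ihp, he]
      · rw [hb, if_neg Bool.false_ne_true]
        simp only [_root_.map_mul, Equiv.Perm.mul_apply, _root_.map_inv, phi_of]
        rw [ihp]
        exact (Equiv.Perm.inv_eq_iff_eq.2 he.symm)

/-- equivariance of the tree-path words relative to any compatible action -/
lemma tt_equivariant {Y : Type*} [MulAction (FreeGroup (Fin n)) Y] (p : X → Y)
    (hcomp : ∀ v s, good v s → p (σ s v) = FreeGroup.of s • p v) (x : X) :
    p x = tt σ v₀ good hconn x • p v₀ := by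
  generalize hk : dd σ v₀ good hconn x = k
  induction k using Nat.strong_induction_on generalizing x with
  | _ k ih =>
    rw [tt]
    by_cases hx : dd σ v₀ good hconn x = 0
    · rw [dif_pos hx, one_smul, eq_v0_of_dd_eq_zero σ v₀ good hconn hx]
    · rw [dif_neg hx]
      obtain ⟨hlt, hor⟩ := stepv_spec σ v₀ good hconn x hx
      set q := stepv σ v₀ good hconn x hx with hq
      have ihp := ih (dd σ v₀ good hconn q.1) (hk ▸ hlt) q.1 rfl
      rcases hor with ⟨hb, hg, he⟩ | ⟨hb, hg, he⟩
      · rw [hb, if_pos rfl]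
        simp only [mul_smul]
        rw [← ihp, ← hcomp _ _ hg, he]
      · rw [hb, if_neg Bool.false_ne_true]
        simp only [mul_smul]
        rw [← ihp, ← he, hcomp _ _ hg, inv_smul_smul]

/-- tree darts: the darts used by the spanning tree -/
def treeDart (v : X) (s : Fin n) : Prop :=
  tt σ v₀ good hconn (σ s v) = FreeGroup.of s * tt σ v₀ good hconn v

/-- non-tree (positive) darts -/
def Edart : Type := {p : X × Fin n // ¬ treeDart σ v₀ good hconn p.1 p.2}

/-- the free group on the non-tree darts -/
abbrev NN : Type := FreeGroup (Edart σ v₀ good hconn)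

open Classical in
/-- the label of a dart in the free group on non-tree darts -/
noncomputable def cc (v : X) (s : Fin n) : NN σ v₀ good hconn :=
  if h : treeDart σ v₀ good hconn v s then 1 else FreeGroup.of ⟨(v, s), h⟩

/-- the lifted permutation action on `X × NN` -/
noncomputable def Sperm (s : Fin n) : Equiv.Perm (X × NN σ v₀ good hconn) where
  toFun q := (σ s q.1, cc σ v₀ good hconn q.1 s * q.2)
  invFun q := ((σ s)⁻¹ q.1, (cc σ v₀ good hconn ((σ s)⁻¹ q.1) s)⁻¹ * q.2)
  left_inv q := by simp
  right_inv q := by simp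

/-- the cocycle extension homomorphism -/
noncomputable def Phi : FreeGroup (Fin n) →* Equiv.Perm (X × NN σ v₀ good hconn) :=
  FreeGroup.lift (Sperm σ v₀ good hconn)

/-- the Schreier rewriting cocycle -/
noncomputable def psi (w : FreeGroup (Fin n)) (x : X) : NN σ v₀ good hconn :=
  (Phi σ v₀ good hconn w (x, 1)).2

lemma psi_def (w : FreeGroup (Fin n)) (x : X) :
    psi σ v₀ good hconn w x = (Phi σ v₀ good hconn w (x, 1)).2 := rfl

lemma Phi_of (s : Fin n) : Phi σ v₀ good hconn (FreeGroup.of s) = Sperm σ v₀ good hconn s :=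
  FreeGroup.lift_apply_of

lemma pure_eq_of (s : Fin n) : (pure s : FreeGroup (Fin n)) = FreeGroup.of s := rfl

lemma psi_of (s : Fin n) (x : X) :
    psi σ v₀ good hconn (FreeGroup.of s) x = cc σ v₀ good hconn x s := by
  rw [psi_def, Phi_of]
  show (σ s x, cc σ v₀ good hconn x s * 1).2 = _
  rw [mul_one]

lemma Phi_of_apply (s : Fin n) (x : X) (m : NN σ v₀ good hconn) :
    Phi σ v₀ good hconn (FreeGroup.of s) (x, m) =
      (phi σ (FreeGroup.of s) x, psi σ v₀ good hconn (FreeGroup.of s) x * m) := by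
  rw [Phi_of, psi_of, phi_of]
  rfl

lemma Phi_of_inv_apply (s : Fin n) (x : X) (m : NN σ v₀ good hconn) :
    Phi σ v₀ good hconn (FreeGroup.of s)⁻¹ (x, m) =
      ((σ s)⁻¹ x, (cc σ v₀ good hconn ((σ s)⁻¹ x) s)⁻¹ * m) := by
  rw [_root_.map_inv, Phi_of]
  rfl

lemma psi_of_inv (s : Fin n) (x : X) :
    psi σ v₀ good hconn (FreeGroup.of s)⁻¹ x = (cc σ v₀ good hconn ((σ s)⁻¹ x) s)⁻¹ := by
  rw [psi_def, Phi_of_inv_apply, mul_one]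

lemma phi_of_inv_apply (s : Fin n) (x : X) :
    phi σ (FreeGroup.of s)⁻¹ x = (σ s)⁻¹ x := by
  rw [_root_.map_inv, phi_of]

lemma Phi_apply (w : FreeGroup (Fin n)) (x : X) (m : NN σ v₀ good hconn) :
    Phi σ v₀ good hconn w (x, m) = (phi σ w x, psi σ v₀ good hconn w x * m) := by
  induction w using FreeGroup.induction_on generalizing x m with
  | C1 =>
    rw [psi_def]
    simp
  | of s => rw [Phi_of_apply]
  | inv_of s _ =>
    rw [Phi_of_inv_apply, psi_of_inv, phi_of_inv_apply]
  | mul a b iha ihb =>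
    have h1 : Phi σ v₀ good hconn (a * b) (x, m) =
        Phi σ v₀ good hconn a (Phi σ v₀ good hconn b (x, m)) := by
      rw [_root_.map_mul]; rfl
    have h2 : psi σ v₀ good hconn (a * b) x =
        psi σ v₀ good hconn a (phi σ b x) * psi σ v₀ good hconn b x := by
      have e1 : Phi σ v₀ good hconn (a * b) (x, 1) =
          Phi σ v₀ good hconn a (Phi σ v₀ good hconn b (x, 1)) := by
        rw [_root_.map_mul]; rfl
      rw [psi_def, e1, ihb, iha, mul_one]
    have h3 : phi σ (a * b) x = phi σ a (phi σ b x) := by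
      rw [_root_.map_mul]; rfl
    rw [h1, ihb, iha, h2, h3, mul_assoc]

lemma psi_mul (a b : FreeGroup (Fin n)) (x : X) :
    psi σ v₀ good hconn (a * b) x =
      psi σ v₀ good hconn a (phi σ b x) * psi σ v₀ good hconn b x := by
  have e1 : Phi σ v₀ good hconn (a * b) (x, 1) =
      Phi σ v₀ good hconn a (Phi σ v₀ good hconn b (x, 1)) := by
    rw [_root_.map_mul]; rfl
  rw [psi_def, e1, Phi_apply, Phi_apply, mul_one]

lemma psi_one (x : X) : psi σ v₀ good hconn 1 x = 1 := by
  rw [psi_def]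
  simp

lemma phi_mul_apply (a b : FreeGroup (Fin n)) (x : X) :
    phi σ (a * b) x = phi σ a (phi σ b x) := by
  rw [_root_.map_mul]; rfl

lemma psi_inv (w : FreeGroup (Fin n)) (x : X) :
    psi σ v₀ good hconn w⁻¹ x = (psi σ v₀ good hconn w (phi σ w⁻¹ x))⁻¹ := by
  have h0 : psi σ v₀ good hconn (w * w⁻¹) x = 1 := by
    rw [mul_inv_cancel, psi_one]
  rw [psi_mul] at h0
  exact eq_inv_of_mul_eq_one_right h0

lemma tt_psi (x : X) : psi σ v₀ good hconn (tt σ v₀ good hconn x) v₀ = 1 := by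
  generalize hk : dd σ v₀ good hconn x = k
  induction k using Nat.strong_induction_on generalizing x with
  | _ k ih =>
    by_cases hx : dd σ v₀ good hconn x = 0
    · rw [tt, dif_pos hx, psi_one]
    · obtain ⟨hlt, hor⟩ := stepv_spec σ v₀ good hconn x hx
      set q := stepv σ v₀ good hconn x hx with hq
      have ihp := ih (dd σ v₀ good hconn q.1) (hk ▸ hlt) q.1 rfl
      have htx : tt σ v₀ good hconn x =
          (if q.2.2 then FreeGroup.of q.2.1 else (FreeGroup.of q.2.1)⁻¹) *
            tt σ v₀ good hconn q.1 := by
        conv_lhs => rw [tt, dif_neg hx]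
      rcases hor with ⟨hb, hg, he⟩ | ⟨hb, hg, he⟩
      · rw [hb, if_pos rfl] at htx
        rw [htx, psi_mul, tt_phi, ihp, mul_one, psi_of]
        have htd : treeDart σ v₀ good hconn q.1 q.2.1 := by
          rw [treeDart, he, htx]
        rw [cc, dif_pos htd]
      · rw [hb, if_neg Bool.false_ne_true] at htx
        have hxq : (σ q.2.1)⁻¹ q.1 = x := Equiv.Perm.inv_eq_iff_eq.2 he.symm
        rw [htx, psi_mul, tt_phi, ihp, mul_one, psi_of_inv, hxq]
        have htd : treeDart σ v₀ good hconn x q.2.1 := by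
          rw [treeDart, he, htx, mul_inv_cancel_left]
        rw [cc, dif_pos htd, inv_one]

/-- the Schreier generator associated to a non-tree dart -/
noncomputable def be (e : Edart σ v₀ good hconn) : FreeGroup (Fin n) :=
  (tt σ v₀ good hconn (σ e.1.2 e.1.1))⁻¹ * FreeGroup.of e.1.2 * tt σ v₀ good hconn e.1.1

/-- the evaluation homomorphism from the free group on non-tree darts -/
noncomputable def bh : NN σ v₀ good hconn →* FreeGroup (Fin n) :=
  FreeGroup.lift (be σ v₀ good hconn)

lemma bh_of (e : Edart σ v₀ good hconn) :
    bh σ v₀ good hconn (FreeGroup.of e) = be σ v₀ good hconn e := FreeGroup.lift_apply_of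

lemma bh_cc (x : X) (s : Fin n) :
    bh σ v₀ good hconn (cc σ v₀ good hconn x s) =
      (tt σ v₀ good hconn (σ s x))⁻¹ * FreeGroup.of s * tt σ v₀ good hconn x := by
  rw [cc]
  by_cases h : treeDart σ v₀ good hconn x s
  · rw [dif_pos h, _root_.map_one, treeDart] at *
    rw [h]
    group
  · rw [dif_neg h]; exact bh_of σ v₀ good hconn ⟨(x, s), h⟩

lemma bh_psi (w : FreeGroup (Fin n)) (x : X) :
    bh σ v₀ good hconn (psi σ v₀ good hconn w x) =
      (tt σ v₀ good hconn (phi σ w x))⁻¹ * w * tt σ v₀ good hconn x := by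
  induction w using FreeGroup.induction_on generalizing x with
  | C1 =>
    rw [psi_one, _root_.map_one]
    have h1 : phi σ 1 x = x := by rw [_root_.map_one]; rfl
    rw [h1]
    group
  | of s =>
    rw [psi_of, bh_cc, phi_of]
  | inv_of s _ =>
    rw [psi_of_inv, _root_.map_inv, bh_cc, phi_of_inv_apply,
      ← Equiv.Perm.mul_apply, mul_inv_cancel, Equiv.Perm.one_apply]
    group
  | mul a b iha ihb =>
    rw [psi_mul, _root_.map_mul, iha, ihb, phi_mul_apply]
    group

/-- the stabilizer subgroup of the base point -/
noncomputable def UU : Subgroup (FreeGroup (Fin n)) :=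
  (MulAction.stabilizer (Equiv.Perm X) v₀).comap (phi σ)

lemma mem_UU {w : FreeGroup (Fin n)} : w ∈ UU σ v₀ ↔ phi σ w v₀ = v₀ := by
  rw [UU, Subgroup.mem_comap, MulAction.mem_stabilizer_iff]
  rfl

lemma be_mem_UU (e : Edart σ v₀ good hconn) : be σ v₀ good hconn e ∈ UU σ v₀ := by
  rw [mem_UU, be, phi_mul_apply, phi_mul_apply, tt_phi, phi_of, _root_.map_inv]
  exact Equiv.Perm.inv_eq_iff_eq.2 (tt_phi σ v₀ good hconn (σ e.1.2 e.1.1)).symm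

lemma bh_range_le : (bh σ v₀ good hconn).range ≤ UU σ v₀ := by
  rw [bh]
  refine FreeGroup.lift.range_le ?_
  rintro w ⟨e, rfl⟩
  exact be_mem_UU σ v₀ good hconn e

lemma bh_mem_UU (m : NN σ v₀ good hconn) : bh σ v₀ good hconn m ∈ UU σ v₀ :=
  bh_range_le σ v₀ good hconn ⟨m, rfl⟩

lemma bh_psi_self {w : FreeGroup (Fin n)} (hw : w ∈ UU σ v₀) :
    bh σ v₀ good hconn (psi σ v₀ good hconn w v₀) = w := by
  rw [bh_psi, (mem_UU σ v₀).1 hw, tt_v0]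
  group

lemma psi_be (e : Edart σ v₀ good hconn) :
    psi σ v₀ good hconn (be σ v₀ good hconn e) v₀ = FreeGroup.of e := by
  rw [be, psi_mul, psi_mul, tt_phi, tt_psi, mul_one, phi_of, psi_of, psi_inv]
  have h1 : phi σ (tt σ v₀ good hconn (σ e.1.2 e.1.1))⁻¹ (σ e.1.2 e.1.1) = v₀ := by
    rw [_root_.map_inv]
    exact Equiv.Perm.inv_eq_iff_eq.2 (tt_phi σ v₀ good hconn (σ e.1.2 e.1.1)).symm
  rw [h1, tt_psi, inv_one, one_mul, cc, dif_neg e.2]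
  rfl

lemma psi_bh (m : NN σ v₀ good hconn) :
    psi σ v₀ good hconn (bh σ v₀ good hconn m) v₀ = m := by
  set rr : NN σ v₀ good hconn →* NN σ v₀ good hconn :=
    MonoidHom.mk' (fun m => psi σ v₀ good hconn (bh σ v₀ good hconn m) v₀) (by
      intro a b
      rw [_root_.map_mul, psi_mul, (mem_UU σ v₀).1 (bh_mem_UU σ v₀ good hconn b)]) with hrr
  have hid : rr = MonoidHom.id _ := by
    refine FreeGroup.ext_hom _ _ ?_
    intro e
    show psi σ v₀ good hconn (bh σ v₀ good hconn (FreeGroup.of e)) v₀ = FreeGroup.of e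
    rw [bh_of, psi_be]
  show rr m = m
  rw [hid]
  rfl

lemma bh_injective : Function.Injective (bh σ v₀ good hconn) := by
  intro a b h
  have ha := psi_bh σ v₀ good hconn a
  rw [h, psi_bh σ v₀ good hconn b] at ha
  exact ha.symm

lemma UU_finiteIndex [Finite X] : (UU σ v₀).FiniteIndex := by
  have hker : (phi σ).ker ≤ UU σ v₀ := by
    intro w hw
    rw [MonoidHom.mem_ker] at hw
    rw [mem_UU, hw]
    rfl
  haveI : (phi σ).ker.FiniteIndex := by
    constructor
    rw [Subgroup.index_ker]
    exact Nat.card_pos.ne'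
  exact Subgroup.finiteIndex_of_le hker

/-- a word traces a path through good darts -/
def GoodPath : List (Fin n × Bool) → Prop
  | [] => True
  | (a :: l) => GoodPath l ∧
      (if a.2 then good (phi σ (FreeGroup.mk l) v₀) a.1
       else good (phi σ (FreeGroup.mk (a :: l)) v₀) a.1)

/-- good non-tree darts -/
def Egood : Set (Edart σ v₀ good hconn) := {e | good e.1.1 e.1.2}

/-- the subgroup of `NN` generated by good non-tree darts -/
noncomputable def Ngood : Subgroup (NN σ v₀ good hconn) :=
  Subgroup.closure (FreeGroup.of '' Egood σ v₀ good hconn)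

lemma cc_mem_Ngood {x : X} {s : Fin n} (h : good x s) :
    cc σ v₀ good hconn x s ∈ Ngood σ v₀ good hconn := by
  rw [cc]
  by_cases ht : treeDart σ v₀ good hconn x s
  · rw [dif_pos ht]; exact one_mem _
  · rw [dif_neg ht]
    exact Subgroup.subset_closure ⟨⟨(x, s), ht⟩, h, rfl⟩

lemma mk_cons (a : Fin n × Bool) (l : List (Fin n × Bool)) :
    FreeGroup.mk (a :: l) = FreeGroup.mk [a] * FreeGroup.mk l := by
  rw [FreeGroup.mul_mk]
  rfl

lemma mk_single_true (s : Fin n) : FreeGroup.mk [(s, true)] = FreeGroup.of s := rfl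

lemma mk_single_false (s : Fin n) : FreeGroup.mk [(s, false)] = (FreeGroup.of s)⁻¹ := by
  have h : (FreeGroup.of s)⁻¹ = FreeGroup.mk (FreeGroup.invRev [(s, true)]) := by
    rw [show FreeGroup.of s = FreeGroup.mk [(s, true)] from rfl, FreeGroup.inv_mk]
  rw [h]
  rfl

lemma goodpath_psi (l : List (Fin n × Bool)) (h : GoodPath σ v₀ good l) :
    psi σ v₀ good hconn (FreeGroup.mk l) v₀ ∈ Ngood σ v₀ good hconn := by
  induction l with
  | nil =>
    rw [← FreeGroup.one_eq_mk, psi_one]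
    exact one_mem _
  | cons a l ih =>
    obtain ⟨h1, h2⟩ := h
    rw [mk_cons, psi_mul]
    refine mul_mem ?_ (ih h1)
    obtain ⟨s, b⟩ := a
    cases b with
    | true =>
      rw [if_pos rfl] at h2
      rw [mk_single_true, psi_of]
      exact cc_mem_Ngood σ v₀ good hconn h2
    | false =>
      rw [if_neg Bool.false_ne_true] at h2
      rw [mk_single_false, psi_of_inv]
      refine inv_mem (cc_mem_Ngood σ v₀ good hconn ?_)
      rw [mk_cons, phi_mul_apply, mk_single_false, phi_of_inv_apply] at h2
      exact h2

/-- the subgroup of elements tracing loops through good darts -/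
def Hcore : Subgroup (FreeGroup (Fin n)) where
  carrier := {w | w ∈ UU σ v₀ ∧ psi σ v₀ good hconn w v₀ ∈ Ngood σ v₀ good hconn}
  one_mem' := ⟨one_mem _, by rw [psi_one]; exact one_mem _⟩
  mul_mem' {a b} ha hb := ⟨mul_mem ha.1 hb.1, by
    rw [psi_mul, (mem_UU σ v₀).1 hb.1]
    exact mul_mem ha.2 hb.2⟩
  inv_mem' {a} ha := ⟨inv_mem ha.1, by
    rw [psi_inv, (mem_UU σ v₀).1 (inv_mem ha.1)]
    exact inv_mem ha.2⟩

theorem abstract_hall [Finite X] (Hp : Subgroup (FreeGroup (Fin n)))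
    (hsub : Hp ≤ Hcore σ v₀ good hconn)
    (hgen : ∀ e : Edart σ v₀ good hconn, good e.1.1 e.1.2 → be σ v₀ good hconn e ∈ Hp) :
    ∃ (U : Subgroup (FreeGroup (Fin n))) (hHU : Hp ≤ U) (B : Subgroup (FreeGroup (Fin n)))
      (hBU : B ≤ U), U.FiniteIndex ∧
      Function.Bijective
        (Monoid.Coprod.lift (Subgroup.inclusion hHU) (Subgroup.inclusion hBU)) := by
  classical
  set E := Edart σ v₀ good hconn with hE
  set P : E → Prop := fun e => good e.1.1 e.1.2 with hP
  -- the two halves of the generating set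
  set m1 : FreeGroup {e : E // P e} →* FreeGroup (Fin n) :=
    FreeGroup.lift (fun e => be σ v₀ good hconn e.1) with hm1
  set m2 : FreeGroup {e : E // ¬ P e} →* FreeGroup (Fin n) :=
    FreeGroup.lift (fun e => be σ v₀ good hconn e.1) with hm2
  set j1 : FreeGroup {e : E // P e} →* NN σ v₀ good hconn :=
    FreeGroup.lift (fun e => FreeGroup.of e.1) with hj1
  set j2 : FreeGroup {e : E // ¬ P e} →* NN σ v₀ good hconn :=
    FreeGroup.lift (fun e => FreeGroup.of e.1) with hj2
  have hm1j : ∀ y, m1 y = bh σ v₀ good hconn (j1 y) := by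
    intro y
    have : m1 = (bh σ v₀ good hconn).comp j1 := by
      refine FreeGroup.ext_hom _ _ ?_
      intro e
      show m1 (FreeGroup.of e) = bh σ v₀ good hconn (j1 (FreeGroup.of e))
      rw [hm1, hj1, FreeGroup.lift_apply_of, FreeGroup.lift_apply_of, bh_of]
    rw [this]; rfl
  have hm2j : ∀ y, m2 y = bh σ v₀ good hconn (j2 y) := by
    intro y
    have : m2 = (bh σ v₀ good hconn).comp j2 := by
      refine FreeGroup.ext_hom _ _ ?_
      intro e
      show m2 (FreeGroup.of e) = bh σ v₀ good hconn (j2 (FreeGroup.of e))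
      rw [hm2, hj2, FreeGroup.lift_apply_of, FreeGroup.lift_apply_of, bh_of]
    rw [this]; rfl
  -- injectivity of j1, j2 via retractions
  have hj1inj : Function.Injective j1 := by
    set p1 : NN σ v₀ good hconn →* FreeGroup {e : E // P e} :=
      FreeGroup.lift (fun e => if h : P e then FreeGroup.of (⟨e, h⟩ : {e : E // P e}) else 1)
        with hp1
    have hleft : ∀ y, p1 (j1 y) = y := by
      have hcomp : p1.comp j1 = MonoidHom.id _ := by
        refine FreeGroup.ext_hom _ _ ?_
        intro e
        show p1 (j1 (FreeGroup.of e)) = FreeGroup.of e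
        rw [hj1, FreeGroup.lift_apply_of, hp1, FreeGroup.lift_apply_of, dif_pos e.2]
      intro y
      have := DFunLike.congr_fun hcomp y
      simpa using this
    exact Function.LeftInverse.injective hleft
  have hj2inj : Function.Injective j2 := by
    set p2 : NN σ v₀ good hconn →* FreeGroup {e : E // ¬ P e} :=
      FreeGroup.lift (fun e => if h : ¬ P e then FreeGroup.of (⟨e, h⟩ : {e : E // ¬ P e}) else 1)
        with hp2
    have hleft : ∀ y, p2 (j2 y) = y := by
      have hcomp : p2.comp j2 = MonoidHom.id _ := by
        refine FreeGroup.ext_hom _ _ ?_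
        intro e
        show p2 (j2 (FreeGroup.of e)) = FreeGroup.of e
        rw [hj2, FreeGroup.lift_apply_of, hp2, FreeGroup.lift_apply_of, dif_pos e.2]
      intro y
      have := DFunLike.congr_fun hcomp y
      simpa using this
    exact Function.LeftInverse.injective hleft
  have hm1inj : Function.Injective m1 := by
    intro a b h
    rw [hm1j, hm1j] at h
    exact hj1inj (bh_injective σ v₀ good hconn h)
  have hm2inj : Function.Injective m2 := by
    intro a b h
    rw [hm2j, hm2j] at h
    exact hj2inj (bh_injective σ v₀ good hconn h)
  -- ranges
  have hr1le : m1.range ≤ Hp := by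
    rw [hm1]
    refine FreeGroup.lift.range_le ?_
    rintro w ⟨e, rfl⟩
    exact hgen e.1 e.2
  have hr1ge : Hp ≤ m1.range := by
    intro w hw
    obtain ⟨hU, hN⟩ := hsub hw
    have hrep : bh σ v₀ good hconn (psi σ v₀ good hconn w v₀) = w :=
      bh_psi_self σ v₀ good hconn hU
    have hmap : (Ngood σ v₀ good hconn).map (bh σ v₀ good hconn) ≤ m1.range := by
      rw [Ngood, MonoidHom.map_closure]
      refine (Subgroup.closure_le _).2 ?_
      rintro w' ⟨w'', ⟨e, he, rfl⟩, rfl⟩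
      rw [bh_of]
      exact ⟨FreeGroup.of ⟨e, he⟩, by rw [hm1, FreeGroup.lift_apply_of]⟩
    exact hmap ⟨psi σ v₀ good hconn w v₀, hN, hrep⟩
  have hBle : m2.range ≤ UU σ v₀ := by
    rw [hm2]
    refine FreeGroup.lift.range_le ?_
    rintro w ⟨e, rfl⟩
    exact be_mem_UU σ v₀ good hconn e.1
  have hHU : Hp ≤ UU σ v₀ := fun w hw => (hsub hw).1
  -- the restricted isomorphisms
  set m1' : FreeGroup {e : E // P e} →* Hp :=
    m1.codRestrict Hp (fun y => hr1le ⟨y, rfl⟩) with hm1'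
  set m2' : FreeGroup {e : E // ¬ P e} →* m2.range := m2.rangeRestrict with hm2'
  set mU : NN σ v₀ good hconn →* UU σ v₀ :=
    (bh σ v₀ good hconn).codRestrict (UU σ v₀) (fun m => bh_mem_UU σ v₀ good hconn m) with hmU
  have hm1'bij : Function.Bijective m1' := by
    constructor
    · intro a b h
      exact hm1inj (congrArg Subtype.val h)
    · rintro ⟨w, hw⟩
      obtain ⟨y, hy⟩ := hr1ge hw
      exact ⟨y, Subtype.ext hy⟩
  have hm2'bij : Function.Bijective m2' := by
    constructor
    · intro a b h
      exact hm2inj (congrArg Subtype.val h)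
    · exact m2.rangeRestrict_surjective
  have hmUbij : Function.Bijective mU := by
    constructor
    · intro a b h
      exact bh_injective σ v₀ good hconn (congrArg Subtype.val h)
    · rintro ⟨u, hu⟩
      exact ⟨psi σ v₀ good hconn u v₀, Subtype.ext (bh_psi_self σ v₀ good hconn hu)⟩
  -- the free product comparison
  set JJ : Monoid.Coprod (FreeGroup {e : E // P e}) (FreeGroup {e : E // ¬ P e}) →*
      NN σ v₀ good hconn := Monoid.Coprod.lift j1 j2 with hJJ
  have hJJbij : Function.Bijective JJ := by
    set ρ : NN σ v₀ good hconn →*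
        Monoid.Coprod (FreeGroup {e : E // P e}) (FreeGroup {e : E // ¬ P e}) :=
      FreeGroup.lift (fun e =>
        if h : P e then Monoid.Coprod.inl (FreeGroup.of (⟨e, h⟩ : {e : E // P e}))
        else Monoid.Coprod.inr (FreeGroup.of (⟨e, h⟩ : {e : E // ¬ P e}))) with hρ
    have h1 : JJ.comp ρ = MonoidHom.id _ := by
      refine FreeGroup.ext_hom _ _ ?_
      intro e
      show JJ (ρ (FreeGroup.of e)) = FreeGroup.of e
      rw [hρ, FreeGroup.lift_apply_of]
      by_cases h : P e
      · rw [dif_pos h, hJJ, Monoid.Coprod.lift_apply_inl, hj1, FreeGroup.lift_apply_of]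
      · rw [dif_neg h, hJJ, Monoid.Coprod.lift_apply_inr, hj2, FreeGroup.lift_apply_of]
    have h2 : ρ.comp JJ = MonoidHom.id _ := by
      refine Monoid.Coprod.hom_ext ?_ ?_
      · refine FreeGroup.ext_hom _ _ ?_
        intro e
        show ρ (JJ (Monoid.Coprod.inl (FreeGroup.of e))) = Monoid.Coprod.inl (FreeGroup.of e)
        rw [hJJ, Monoid.Coprod.lift_apply_inl, hj1, FreeGroup.lift_apply_of, hρ, FreeGroup.lift_apply_of,
          dif_pos e.2]
      · refine FreeGroup.ext_hom _ _ ?_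
        intro e
        show ρ (JJ (Monoid.Coprod.inr (FreeGroup.of e))) = Monoid.Coprod.inr (FreeGroup.of e)
        rw [hJJ, Monoid.Coprod.lift_apply_inr, hj2, FreeGroup.lift_apply_of, hρ, FreeGroup.lift_apply_of,
          dif_neg e.2]
    refine Function.bijective_iff_has_inverse.2 ⟨ρ, ?_, ?_⟩
    · intro y
      have := DFunLike.congr_fun h2 y
      simpa using this
    · intro y
      have := DFunLike.congr_fun h1 y
      simpa using this
  set MM := Monoid.Coprod.map m1' m2' with hMM
  have hMMbij : Function.Bijective MM := by
    set em1 := MulEquiv.ofBijective m1' hm1'bij with hem1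
    set em2 := MulEquiv.ofBijective m2' hm2'bij with hem2
    set MMinv := Monoid.Coprod.map em1.symm.toMonoidHom em2.symm.toMonoidHom with hMMinv
    have hcomp1 : MMinv.comp MM = MonoidHom.id _ := by
      have h1 : MM = Monoid.Coprod.map em1.toMonoidHom em2.toMonoidHom := rfl
      rw [h1, hMMinv, Monoid.Coprod.map_comp_map]
      have e1 : em1.symm.toMonoidHom.comp em1.toMonoidHom = MonoidHom.id _ :=
        MonoidHom.ext fun x => em1.symm_apply_apply x
      have e2 : em2.symm.toMonoidHom.comp em2.toMonoidHom = MonoidHom.id _ :=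
        MonoidHom.ext fun x => em2.symm_apply_apply x
      rw [e1, e2, Monoid.Coprod.map_id_id]
    have hcomp2 : MM.comp MMinv = MonoidHom.id _ := by
      have h1 : MM = Monoid.Coprod.map em1.toMonoidHom em2.toMonoidHom := rfl
      rw [h1, hMMinv, Monoid.Coprod.map_comp_map]
      have e1 : em1.toMonoidHom.comp em1.symm.toMonoidHom = MonoidHom.id _ :=
        MonoidHom.ext fun x => em1.apply_symm_apply x
      have e2 : em2.toMonoidHom.comp em2.symm.toMonoidHom = MonoidHom.id _ :=
        MonoidHom.ext fun x => em2.apply_symm_apply x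
      rw [e1, e2, Monoid.Coprod.map_id_id]
    refine Function.bijective_iff_has_inverse.2 ⟨MMinv, ?_, ?_⟩
    · intro y
      have := DFunLike.congr_fun hcomp1 y
      simpa using this
    · intro y
      have := DFunLike.congr_fun hcomp2 y
      simpa using this
  refine ⟨UU σ v₀, hHU, m2.range, hBle, UU_finiteIndex σ v₀, ?_⟩
  set Λ := Monoid.Coprod.lift (Subgroup.inclusion hHU) (Subgroup.inclusion hBle) with hΛ
  have heq : Λ.comp MM = mU.comp JJ := by
    refine Monoid.Coprod.hom_ext ?_ ?_
    · refine FreeGroup.ext_hom _ _ ?_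
      intro e
      show Λ (MM (Monoid.Coprod.inl (FreeGroup.of e))) = mU (JJ (Monoid.Coprod.inl (FreeGroup.of e)))
      rw [hMM, Monoid.Coprod.map_apply_inl, hΛ, Monoid.Coprod.lift_apply_inl,
        hJJ, Monoid.Coprod.lift_apply_inl]
      refine Subtype.ext ?_
      show (m1' (FreeGroup.of e) : FreeGroup (Fin n)) = (mU (j1 (FreeGroup.of e)) : FreeGroup (Fin n))
      show m1 (FreeGroup.of e) = bh σ v₀ good hconn (j1 (FreeGroup.of e))
      rw [hm1j]
    · refine FreeGroup.ext_hom _ _ ?_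
      intro e
      show Λ (MM (Monoid.Coprod.inr (FreeGroup.of e))) = mU (JJ (Monoid.Coprod.inr (FreeGroup.of e)))
      rw [hMM, Monoid.Coprod.map_apply_inr, hΛ, Monoid.Coprod.lift_apply_inr,
        hJJ, Monoid.Coprod.lift_apply_inr]
      refine Subtype.ext ?_
      show m2 (FreeGroup.of e) = bh σ v₀ good hconn (j2 (FreeGroup.of e))
      rw [hm2j]
  have hcompbij : Function.Bijective (⇑Λ ∘ ⇑MM) := by
    have : ⇑Λ ∘ ⇑MM = ⇑(Λ.comp MM) := rfl
    rw [this, heq]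
    exact (hmUbij.comp hJJbij)
  exact (Function.Bijective.of_comp_iff Λ hMMbij).1 hcompbij

end Tree

/-- **Marshall Hall's theorem**: every finitely generated subgroup of a finitely generated
free group is a free factor of a subgroup of finite index. -/
theorem hall_free_factor {n : ℕ} (Hp : Subgroup (FreeGroup (Fin n))) (hfg : Hp.FG) :
    ∃ (U : Subgroup (FreeGroup (Fin n))) (hHU : Hp ≤ U) (B : Subgroup (FreeGroup (Fin n)))
      (hBU : B ≤ U), U.FiniteIndex ∧
      Function.Bijective
        (Monoid.Coprod.lift (Subgroup.inclusion hHU) (Subgroup.inclusion hBU)) := by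
  classical
  obtain ⟨S, hS⟩ := hfg
  set Y := FreeGroup (Fin n) ⧸ Hp with hY
  set c1 : Y := QuotientGroup.mk 1 with hc1
  have hsmul : ∀ w : FreeGroup (Fin n), w • c1 = QuotientGroup.mk w := by
    intro w
    rw [hc1, MulAction.Quotient.smul_mk, smul_eq_mul, mul_one]
  have hloop : ∀ w : FreeGroup (Fin n), w • c1 = c1 ↔ w ∈ Hp := by
    intro w
    rw [hsmul, hc1]
    constructor
    · intro h
      have := QuotientGroup.eq.1 h
      simpa using inv_mem this
    · intro h
      exact QuotientGroup.eq.2 (by simpa using inv_mem h)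
  set Vset : Set Y :=
    {y | ∃ g ∈ S, ∃ j : ℕ, y = FreeGroup.mk ((FreeGroup.toWord g).drop j) • c1} ∪ {c1}
    with hVset
  -- finiteness of the vertex set
  have hVfin : Vset.Finite := by
    set T : Finset (FreeGroup (Fin n)) :=
      insert 1 (S.biUnion fun g => (Finset.range ((FreeGroup.toWord g).length + 1)).image
        fun j => FreeGroup.mk ((FreeGroup.toWord g).drop j)) with hT
    refine Set.Finite.subset (Set.Finite.image (fun u => u • c1) T.finite_toSet) ?_
    rintro y (⟨g, hg, j, rfl⟩ | hy)
    · refine ⟨FreeGroup.mk ((FreeGroup.toWord g).drop j), ?_, rfl⟩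
      have hdrop : (FreeGroup.toWord g).drop j =
          (FreeGroup.toWord g).drop (min j (FreeGroup.toWord g).length) := by
        rcases le_total j (FreeGroup.toWord g).length with h | h
        · rw [min_eq_left h]
        · rw [min_eq_right h, List.drop_eq_nil_of_le h, List.drop_length]
      rw [hdrop]
      show FreeGroup.mk ((FreeGroup.toWord g).drop (min j (FreeGroup.toWord g).length)) ∈ T
      rw [hT]
      exact Finset.mem_insert_of_mem (Finset.mem_biUnion.2 ⟨g, hg,
        Finset.mem_image.2 ⟨min j (FreeGroup.toWord g).length,
          Finset.mem_range.2 (by omega), rfl⟩⟩)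
    · rcases hy with rfl
      exact ⟨1, by simp [hT], one_smul _ _⟩
  set X : Type := ↥Vset with hX
  haveI : Finite X := hVfin.to_subtype
  set v₀ : X := ⟨c1, Or.inr rfl⟩ with hv₀
  set good : X → Fin n → Prop := fun x s => FreeGroup.of s • (x : Y) ∈ Vset with hgood
  -- the permutations extending the partial coset translations
  have hσx : ∀ s : Fin n, ∃ e : Equiv.Perm X, ∀ x : X, good x s →
      ((e x : X) : Y) = FreeGroup.of s • (x : Y) := by
    intro s
    set f : X → X := fun x =>
      if h : FreeGroup.of s • (x : Y) ∈ Vset then ⟨FreeGroup.of s • (x : Y), h⟩ else x with hf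
    have hinj : Set.InjOn f {x | good x s} := by
      intro x hx y hy hxy
      have hx' : FreeGroup.of s • (x : Y) ∈ Vset := hx
      have hy' : FreeGroup.of s • (y : Y) ∈ Vset := hy
      rw [hf] at hxy
      simp only [dif_pos hx', dif_pos hy'] at hxy
      have h2 : FreeGroup.of s • (x : Y) = FreeGroup.of s • (y : Y) :=
        congrArg Subtype.val hxy
      exact Subtype.ext (MulAction.injective (FreeGroup.of s) h2)
    obtain ⟨e, he⟩ := exists_perm_extension hinj
    refine ⟨e, fun x hx => ?_⟩
    rw [he x hx, hf]
    simp only [dif_pos (show FreeGroup.of s • (x : Y) ∈ Vset from hx)]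
  set σ : Fin n → Equiv.Perm X := fun s => (hσx s).choose with hσ
  have key : ∀ (s : Fin n) (x : X), good x s → ((σ s x : X) : Y) = FreeGroup.of s • (x : Y) :=
    fun s => (hσx s).choose_spec
  -- the path lemma
  have path : ∀ l : List (Fin n × Bool),
      (∀ j, FreeGroup.mk (l.drop j) • c1 ∈ Vset) →
      ((phi σ (FreeGroup.mk l) v₀ : X) : Y) = FreeGroup.mk l • c1 ∧
        GoodPath σ v₀ good l ∧ ∃ k, phi σ (FreeGroup.mk l) v₀ ∈ reach σ v₀ good k := by
    intro l
    induction l with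
    | nil =>
      intro _
      have h0 : FreeGroup.mk ([] : List (Fin n × Bool)) = 1 := (FreeGroup.one_eq_mk).symm
      rw [h0]
      refine ⟨?_, trivial, 0, ?_⟩
      · rw [_root_.map_one, one_smul]
        rfl
      · rw [_root_.map_one]
        rfl
    | cons a l ih =>
      intro hl
      have hl' : ∀ j, FreeGroup.mk (l.drop j) • c1 ∈ Vset := fun j => hl (j + 1)
      obtain ⟨hcoe, hgp, k, hk⟩ := ih hl'
      have ha0 : FreeGroup.mk (a :: l) • c1 ∈ Vset := hl 0
      obtain ⟨s, b⟩ := a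
      cases b with
      | true =>
        have hmk : FreeGroup.mk ((s, true) :: l) = FreeGroup.of s * FreeGroup.mk l := by
          rw [mk_cons, mk_single_true]
        have hgl : good (phi σ (FreeGroup.mk l) v₀) s := by
          rw [hgood]
          show FreeGroup.of s • ((phi σ (FreeGroup.mk l) v₀ : X) : Y) ∈ Vset
          rw [hcoe, ← mul_smul, ← hmk]
          exact ha0
        have hphi : phi σ (FreeGroup.mk ((s, true) :: l)) v₀ =
            σ s (phi σ (FreeGroup.mk l) v₀) := by
          rw [hmk, phi_mul_apply, phi_of]
        refine ⟨?_, ⟨hgp, ?_⟩, k + 1, ?_⟩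
        · rw [hphi, key s _ hgl, hcoe, ← mul_smul, ← hmk]
        · show if true then good (phi σ (FreeGroup.mk l) v₀) s
              else good (phi σ (FreeGroup.mk ((s, true) :: l)) v₀) s
          rw [if_pos rfl]
          exact hgl
        · rw [hphi]
          exact Or.inr ⟨phi σ (FreeGroup.mk l) v₀, hk, s, Or.inl ⟨hgl, rfl⟩⟩
      | false =>
        have hmk : FreeGroup.mk ((s, false) :: l) = (FreeGroup.of s)⁻¹ * FreeGroup.mk l := by
          rw [mk_cons, mk_single_false]
        set xnew : X := ⟨FreeGroup.mk ((s, false) :: l) • c1, ha0⟩ with hxnew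
        have hgx : good xnew s := by
          rw [hgood]
          show FreeGroup.of s • (FreeGroup.mk ((s, false) :: l) • c1) ∈ Vset
          rw [hmk, ← mul_smul, ← mul_assoc, mul_inv_cancel, one_mul]
          rw [← hcoe]
          exact (phi σ (FreeGroup.mk l) v₀ : X).2
        have hstep : σ s xnew = phi σ (FreeGroup.mk l) v₀ := by
          refine Subtype.ext ?_
          rw [key s _ hgx]
          show FreeGroup.of s • (FreeGroup.mk ((s, false) :: l) • c1) = _
          rw [hmk, ← mul_smul, ← mul_assoc, mul_inv_cancel, one_mul, hcoe]
        have hphi : phi σ (FreeGroup.mk ((s, false) :: l)) v₀ = xnew := by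
          rw [hmk, phi_mul_apply, phi_of_inv_apply]
          exact Equiv.Perm.inv_eq_iff_eq.2 hstep.symm
        refine ⟨?_, ⟨hgp, ?_⟩, k + 1, ?_⟩
        · rw [hphi]
        · show if false then good (phi σ (FreeGroup.mk l) v₀) s
              else good (phi σ (FreeGroup.mk ((s, false) :: l)) v₀) s
          rw [if_neg Bool.false_ne_true, hphi]
          exact hgx
        · rw [hphi]
          exact Or.inr ⟨phi σ (FreeGroup.mk l) v₀, hk, s, Or.inr ⟨hgx, hstep⟩⟩
  -- connectivity
  have hconn : ∀ x : X, ∃ k, x ∈ reach σ v₀ good k := by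
    rintro ⟨y, hy | hy⟩
    · obtain ⟨g, hg, j, rfl⟩ := hy
      set l : List (Fin n × Bool) := (FreeGroup.toWord g).drop j with hldef
      have hl : ∀ i, FreeGroup.mk (l.drop i) • c1 ∈ Vset := by
        intro i
        rw [hldef, List.drop_drop]
        exact Or.inl ⟨g, hg, j + i, rfl⟩
      obtain ⟨hcoe, _, k, hk⟩ := path l hl
      refine ⟨k, ?_⟩
      have : phi σ (FreeGroup.mk l) v₀ = ⟨FreeGroup.mk l • c1, Or.inl ⟨g, hg, j, rfl⟩⟩ :=
        Subtype.ext hcoe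
      rwa [this] at hk
    · rcases hy with rfl
      exact ⟨0, rfl⟩
  -- the generators lie in `Hcore`
  have hsub : Hp ≤ Hcore σ v₀ good hconn := by
    rw [← hS]
    refine (Subgroup.closure_le _).2 ?_
    intro g hg
    have hl : ∀ j, FreeGroup.mk ((FreeGroup.toWord g).drop j) • c1 ∈ Vset :=
      fun j => Or.inl ⟨g, hg, j, rfl⟩
    obtain ⟨hcoe, hgp, _⟩ := path (FreeGroup.toWord g) hl
    have hg' : g ∈ Hp := hS ▸ Subgroup.subset_closure hg
    have hmkg : FreeGroup.mk (FreeGroup.toWord g) = g := FreeGroup.mk_toWord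
    have hU : g ∈ UU σ v₀ := by
      rw [mem_UU]
      have : ((phi σ g v₀ : X) : Y) = c1 := by
        rw [← hmkg, hcoe, hmkg, (hloop g).2 hg']
      exact Subtype.ext this
    refine ⟨hU, ?_⟩
    have := goodpath_psi σ v₀ good hconn (FreeGroup.toWord g) hgp
    rwa [hmkg] at this
  -- the good Schreier generators lie in `Hp`
  have hgen : ∀ e : Edart σ v₀ good hconn, good e.1.1 e.1.2 → be σ v₀ good hconn e ∈ Hp := by
    intro e he
    have hequiv : ∀ x : X, (x : Y) = tt σ v₀ good hconn x • c1 := by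
      intro x
      exact tt_equivariant σ v₀ good hconn (fun x : X => (x : Y)) (fun v s h => key s v h) x
    rw [← hloop, be]
    rw [mul_smul, mul_smul, ← hequiv e.1.1, ← key e.1.2 e.1.1 he,
      hequiv (σ e.1.2 e.1.1), inv_smul_smul]
  exact abstract_hall σ v₀ good hconn Hp hsub hgen


end HallAux

set_option maxHeartbeats 1000000 in
open HallAux in
/-- **Hall-type theorem.** Every finitely generated subgroup `H` of
`G = Fₙ × A` is a factor of a finite-index subgroup `K ≤ G`: `Kπ` is the internal
free product of `Hπ` and some subgroup `B` (the canonical map `Hπ ∗ B → Kπ` is an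
isomorphism), and `L_K` is the internal direct product of `L_H` and some `C ≤ A`. -/
theorem fg_subgroup_is_factor_of_finite_index
    (n : ℕ) (A : Type) [CommGroup A] [Group.FG A]
    (H : Subgroup (FreeGroup (Fin n) × A)) (hH : H.FG) :
    ∃ K : Subgroup (FreeGroup (Fin n) × A), H ≤ K ∧ K.FiniteIndex ∧
      (∃ (B : Subgroup (FreeGroup (Fin n)))
          (hB : B ≤ K.map (MonoidHom.fst (FreeGroup (Fin n)) A))
          (hHK : H.map (MonoidHom.fst (FreeGroup (Fin n)) A) ≤
            K.map (MonoidHom.fst (FreeGroup (Fin n)) A)),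
          Function.Bijective
            (Monoid.Coprod.lift (Subgroup.inclusion hHK) (Subgroup.inclusion hB))) ∧
      ∃ C : Subgroup A,
        H.comap (MonoidHom.inr (FreeGroup (Fin n)) A) ⊔ C =
          K.comap (MonoidHom.inr (FreeGroup (Fin n)) A) ∧
        H.comap (MonoidHom.inr (FreeGroup (Fin n)) A) ⊓ C = ⊥ := by
  classical
  set F := FreeGroup (Fin n) with hF
  set fst : F × A →* F := MonoidHom.fst F A with hfst
  set inr : A →* F × A := MonoidHom.inr F A with hinr
  set Hp : Subgroup F := H.map fst with hHp
  -- Hπ is finitely generated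
  have hHpfg : Hp.FG := by
    obtain ⟨T, hT⟩ := hH
    exact ⟨T.image fst, by rw [Finset.coe_image, ← MonoidHom.map_closure, hT]⟩
  -- the abelian complement
  set L : Subgroup A := H.comap inr with hL
  obtain ⟨C, hLC, hfinQ⟩ := abelian_complement A L
  set KA : Subgroup A := L ⊔ C with hKA
  set Q := A ⧸ KA with hQ
  set mkQ : A →* Q := QuotientGroup.mk' KA with hmkQ
  -- Hall's theorem
  obtain ⟨U, hHU, B, hBU, hUfi, hbij⟩ := hall_free_factor Hp hHpfg
  -- the induced homomorphism `Hπ → A ⧸ K_A`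
  have hex : ∀ x : Hp, ∃ a : A, ((x : F), a) ∈ H := by
    rintro ⟨x, hx⟩
    obtain ⟨g, hg, hge⟩ := Subgroup.mem_map.1 hx
    exact ⟨g.2, by rwa [show ((⟨x, hx⟩ : Hp) : F) = x from rfl,
      show ((x : F), g.2) = g from Prod.ext hge.symm rfl]⟩
  set f0 : Hp → Q := fun x => mkQ (hex x).choose with hf0
  have hch : ∀ x : Hp, ((x : F), (hex x).choose) ∈ H := fun x => (hex x).choose_spec
  have hwd : ∀ (w : F) (a : A) (hw : w ∈ Hp), ((w, a) ∈ H) → f0 ⟨w, hw⟩ = mkQ a := by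
    intro w a hw hmem
    have h1 : ((w, (hex ⟨w, hw⟩).choose) : F × A) ∈ H := hch ⟨w, hw⟩
    have h2 : ((w, (hex ⟨w, hw⟩).choose)⁻¹ * (w, a) : F × A) ∈ H :=
      mul_mem (inv_mem h1) hmem
    have h3 : ((hex ⟨w, hw⟩).choose⁻¹ * a) ∈ L := by
      rw [hL]
      show ((1 : F), (hex ⟨w, hw⟩).choose⁻¹ * a) ∈ H
      have : ((w, (hex ⟨w, hw⟩).choose)⁻¹ * (w, a) : F × A) =
          ((1 : F), (hex ⟨w, hw⟩).choose⁻¹ * a) := by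
        simp [Prod.ext_iff]
        exact inv_mul_cancel w
      rwa [this] at h2
    rw [hf0]
    exact QuotientGroup.eq.2 (Subgroup.mem_sup_left h3)
  set f : Hp →* Q := MonoidHom.mk' f0 (by
    intro x y
    have hx := hch x
    have hy := hch y
    have hxy : (((x * y : Hp) : F), (hex x).choose * (hex y).choose) ∈ H := mul_mem hx hy
    have := hwd ((x * y : Hp) : F) ((hex x).choose * (hex y).choose) (x * y).2 hxy
    rw [show (⟨((x * y : Hp) : F), (x * y).2⟩ : Hp) = x * y from rfl] at this
    rw [this, _root_.map_mul]) with hf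
  -- extend to `U` using the free product decomposition
  set eΛ := MulEquiv.ofBijective _ hbij with heΛ
  set g : U →* Q := (Monoid.Coprod.lift f 1).comp eΛ.symm.toMonoidHom with hg
  have hgf : ∀ x : Hp, g (Subgroup.inclusion hHU x) = f x := by
    intro x
    have h1 : Subgroup.inclusion hHU x = eΛ (Monoid.Coprod.inl x) := by
      rw [heΛ]
      exact (Monoid.Coprod.lift_apply_inl (Subgroup.inclusion hHU) (Subgroup.inclusion hBU) x).symm
    rw [hg]
    show (Monoid.Coprod.lift f 1) (eΛ.symm (Subgroup.inclusion hHU x)) = f x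
    rw [h1, MulEquiv.symm_apply_apply, Monoid.Coprod.lift_apply_inl]
  -- the subgroup K
  set K : Subgroup (F × A) :=
    { carrier := {p | ∃ h : p.1 ∈ U, g ⟨p.1, h⟩ = mkQ p.2}
      one_mem' := ⟨one_mem U, by
        rw [show (⟨(1 : F × A).1, one_mem U⟩ : U) = 1 from rfl, _root_.map_one,
          show ((1 : F × A).2) = (1 : A) from rfl, _root_.map_one]⟩
      mul_mem' := by
        rintro p q ⟨hp, hep⟩ ⟨hq, heq⟩
        refine ⟨mul_mem hp hq, ?_⟩
        rw [show (⟨(p * q).1, mul_mem hp hq⟩ : U) = ⟨p.1, hp⟩ * ⟨q.1, hq⟩ from rfl,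
          _root_.map_mul, hep, heq, show (p * q).2 = p.2 * q.2 from rfl, _root_.map_mul]
      inv_mem' := by
        rintro p ⟨hp, hep⟩
        refine ⟨inv_mem hp, ?_⟩
        rw [show (⟨(p⁻¹ : F × A).1, inv_mem hp⟩ : U) = (⟨p.1, hp⟩ : U)⁻¹ from rfl,
          _root_.map_inv, hep, show (p⁻¹ : F × A).2 = p.2⁻¹ from rfl, _root_.map_inv] }
    with hK
  have hmemK : ∀ p : F × A, p ∈ K ↔ ∃ h : p.1 ∈ U, g ⟨p.1, h⟩ = mkQ p.2 := fun p => Iff.rfl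
  -- H ≤ K
  have hHK : H ≤ K := by
    rintro ⟨w, a⟩ hwa
    have hw : w ∈ Hp := Subgroup.mem_map.2 ⟨(w, a), hwa, rfl⟩
    refine ⟨hHU hw, ?_⟩
    rw [show (⟨((w, a) : F × A).1, hHU hw⟩ : U) = Subgroup.inclusion hHU ⟨w, hw⟩ from rfl,
      hgf]
    exact hwd w a hw hwa
  -- K.map fst = U
  have hmapfst : K.map fst = U := by
    ext w
    constructor
    · rintro ⟨p, ⟨hp, _⟩, rfl⟩
      exact hp
    · intro hw
      obtain ⟨a, ha⟩ := QuotientGroup.mk'_surjective KA (g ⟨w, hw⟩)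
      exact ⟨(w, a), ⟨hw, ha.symm⟩, rfl⟩
  -- K.comap inr = K_A
  have hcomapinr : K.comap inr = KA := by
    ext a
    constructor
    · rintro ⟨h1, he⟩
      have h2 : g ⟨(inr a).1, h1⟩ = mkQ (inr a).2 := he
      rw [show (⟨(inr a).1, h1⟩ : U) = 1 from Subtype.ext rfl, _root_.map_one] at h2
      have h4 : mkQ a = 1 := h2.symm
      rw [hmkQ, QuotientGroup.mk'_apply] at h4
      exact (QuotientGroup.eq_one_iff a).1 h4
    · intro ha
      refine ⟨one_mem U, ?_⟩
      rw [show (⟨(inr a).1, one_mem U⟩ : U) = 1 from Subtype.ext rfl, _root_.map_one]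
      have h4 : mkQ a = 1 := by
        rw [hmkQ, QuotientGroup.mk'_apply]
        exact (QuotientGroup.eq_one_iff a).2 ha
      exact h4.symm
  -- finite index
  have hKfi : K.FiniteIndex := by
    set W : Subgroup (F × A) := U.prod ⊤ with hW
    have hWfi : W.index ≠ 0 := by
      rw [hW, Subgroup.index_prod, Subgroup.index_top, mul_one]
      exact hUfi.index_ne_zero
    have hKW : K ≤ W := by
      rintro p ⟨hp, _⟩
      exact Subgroup.mem_prod.2 ⟨hp, trivial⟩
    set χ : W →* Q := MonoidHom.mk' (fun w => g ⟨(w : F × A).1, (Subgroup.mem_prod.1 w.2).1⟩ *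
        (mkQ (w : F × A).2)⁻¹) (by
      intro w z
      rw [show (⟨((w * z : W) : F × A).1, (Subgroup.mem_prod.1 (w * z).2).1⟩ : U) =
        ⟨(w : F × A).1, (Subgroup.mem_prod.1 w.2).1⟩ * ⟨(z : F × A).1, (Subgroup.mem_prod.1 z.2).1⟩
          from rfl, _root_.map_mul,
        show ((w * z : W) : F × A).2 = (w : F × A).2 * (z : F × A).2 from rfl, _root_.map_mul,
        mul_inv]
      exact mul_mul_mul_comm _ _ _ _) with hχ
    have hker : K.subgroupOf W = χ.ker := by
      ext ⟨p, hpW⟩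
      rw [Subgroup.mem_subgroupOf, MonoidHom.mem_ker]
      constructor
      · rintro ⟨hp, hep⟩
        show g ⟨p.1, (Subgroup.mem_prod.1 hpW).1⟩ * (mkQ p.2)⁻¹ = 1
        rw [show (⟨p.1, (Subgroup.mem_prod.1 hpW).1⟩ : U) = ⟨p.1, hp⟩ from rfl, hep,
          mul_inv_cancel]
      · intro he
        have he' : g ⟨p.1, (Subgroup.mem_prod.1 hpW).1⟩ * (mkQ p.2)⁻¹ = 1 := he
        exact ⟨(Subgroup.mem_prod.1 hpW).1, by rwa [mul_inv_eq_one] at he'⟩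
    have hrel : K.relIndex W ≠ 0 := by
      have : K.relIndex W = (K.subgroupOf W).index := rfl
      rw [this, hker, Subgroup.index_ker]
      haveI : Finite Q := hfinQ
      exact Nat.card_pos.ne'
    refine ⟨?_⟩
    rw [← Subgroup.relIndex_mul_index hKW]
    exact Nat.mul_ne_zero hrel hWfi
  refine ⟨K, hHK, hKfi, ?_, ?_⟩
  · rw [show K.map (MonoidHom.fst F A) = U from hmapfst]
    exact ⟨B, hBU, hHU, hbij⟩
  · exact ⟨C, hcomapinr.symm, hLC⟩
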